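/- Let p ≥ 2 and let f : ℝ^d → ℝ be convex, differentiable, and L-smooth w.r.t. ‖·‖_p, and let (x_t), (y_t), (v_t), (a_t), (A_t), (ρ_t), (ψ_t) be HASD iterates started at x_0 ∈ ℝ^d. Then for every t ≥ 0, A_t f(x_t) + B_t ≤ min_{x ∈ ℝ^d} ψ_t(x). -/

import Mathlib

open scoped BigOperators
open scoped InnerProductSpace

/-- The `ℓ_p` "norm" on `ℝ^d` for a real exponent `p`. -/
noncomputable def pnorm (p : ℝ) {d : ℕ} (x : EuclideanSpace ℝ (Fin d)) : ℝ :=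
  (∑ i, |x i| ^ p) ^ (1 / p)

/-- The dual exponent `p* = p/(p-1)`, so that `1/p + 1/p* = 1`. -/
noncomputable def dualExp (p : ℝ) : ℝ := p / (p - 1)

/-- The iterates of the Hyper-Accelerated Steepest Descent (HASD) method for
`f : ℝ^d → ℝ` differentiable, smoothness constant `L > 0`, started at `x0`. -/
structure HASD (d : ℕ) (p L : ℝ) (f : EuclideanSpace ℝ (Fin d) → ℝ)
    (x0 : EuclideanSpace ℝ (Fin d)) where
  x : ℕ → EuclideanSpace ℝ (Fin d)
  y : ℕ → EuclideanSpace ℝ (Fin d)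
  v : ℕ → EuclideanSpace ℝ (Fin d)
  a : ℕ → ℝ
  A : ℕ → ℝ
  ρ : ℕ → ℝ
  ψ : ℕ → EuclideanSpace ℝ (Fin d) → ℝ
  x_zero : x 0 = x0
  A_zero : A 0 = 0
  ψ_zero : ∀ z, ψ 0 z = (1 / 2) * pnorm 2 (z - x0) ^ 2
  /-- `v t` minimizes `ψ t` over `ℝ^d`. -/
  v_min : ∀ t z, ψ t (v t) ≤ ψ t z
  grad_ne : ∀ t : ℕ, gradient f (x (t + 1)) ≠ 0
  ρ_pos : ∀ t : ℕ, 0 < ρ t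
  ρ_lb : ∀ t : ℕ, (1 / 2) * (pnorm 2 (gradient f (x (t + 1))) ^ 2 /
      pnorm (dualExp p) (gradient f (x (t + 1))) ^ 2) ≤ ρ t
  ρ_ub : ∀ t : ℕ, ρ t ≤ 2 * (pnorm 2 (gradient f (x (t + 1))) ^ 2 /
      pnorm (dualExp p) (gradient f (x (t + 1))) ^ 2)
  a_pos : ∀ t : ℕ, 0 < a (t + 1)
  a_eq : ∀ t : ℕ, a (t + 1) ^ 2 = (A t + a (t + 1)) / (18 * L * ρ t)
  A_succ : ∀ t : ℕ, A (t + 1) = A t + a (t + 1)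
  y_def : ∀ t : ℕ, y t = (1 - a (t + 1) / A (t + 1)) • x t + (a (t + 1) / A (t + 1)) • v t
  /-- `x (t+1)` minimizes `z ↦ ⟪∇f(y t), z - y t⟫ + L ‖z - y t‖_p²` over `ℝ^d`. -/
  x_min : ∀ (t : ℕ) (z : EuclideanSpace ℝ (Fin d)),
      ⟪gradient f (y t), x (t + 1) - y t⟫_ℝ + L * pnorm p (x (t + 1) - y t) ^ 2 ≤
      ⟪gradient f (y t), z - y t⟫_ℝ + L * pnorm p (z - y t) ^ 2
  ψ_succ : ∀ (t : ℕ) (z : EuclideanSpace ℝ (Fin d)),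
      ψ (t + 1) z = ψ t z + a (t + 1) * (f (x (t + 1)) + ⟪gradient f (x (t + 1)), z - x (t + 1)⟫_ℝ)

lemma pnorm_nonneg (q : ℝ) {d : ℕ} (x : EuclideanSpace ℝ (Fin d)) : 0 ≤ pnorm q x :=
  Real.rpow_nonneg (Finset.sum_nonneg fun i _ => Real.rpow_nonneg (abs_nonneg _) _) _

lemma pnorm_neg (q : ℝ) {d : ℕ} (x : EuclideanSpace ℝ (Fin d)) : pnorm q (-x) = pnorm q x := by
  unfold pnorm
  congr 1
  refine Finset.sum_congr rfl fun i _ => ?_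
  have : (-x) i = -(x i) := rfl
  rw [this, abs_neg]

lemma pnorm_two {d : ℕ} (x : EuclideanSpace ℝ (Fin d)) : pnorm 2 x = ‖x‖ := by
  rw [pnorm, EuclideanSpace.norm_eq, Real.sqrt_eq_rpow]
  congr 1
  refine Finset.sum_congr rfl fun i _ => ?_
  rw [Real.norm_eq_abs, ← Real.rpow_natCast |x i| 2]
  norm_num

lemma pnorm_pos {q : ℝ} (hq : 0 < q) {d : ℕ} {x : EuclideanSpace ℝ (Fin d)} (hx : x ≠ 0) :
    0 < pnorm q x := by
  obtain ⟨i, hi⟩ : ∃ i, x i ≠ 0 := by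
    by_contra hc
    push_neg at hc
    exact hx (by ext i; exact hc i)
  have h1 : (0:ℝ) < |x i| ^ q := Real.rpow_pos_of_pos (abs_pos.mpr hi) q
  have h2 : (0:ℝ) < ∑ j, |x j| ^ q :=
    lt_of_lt_of_le h1 (Finset.single_le_sum (f := fun j => |x j| ^ q)
      (fun j _ => Real.rpow_nonneg (abs_nonneg _) _) (Finset.mem_univ i))
  exact Real.rpow_pos_of_pos h2 _

lemma pnorm_zero {q : ℝ} (hq : 0 < q) {d : ℕ} : pnorm q (0 : EuclideanSpace ℝ (Fin d)) = 0 := by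
  unfold pnorm
  have : ∀ i : Fin d, |(0 : EuclideanSpace ℝ (Fin d)) i| ^ q = 0 := fun i => by
    have : (0 : EuclideanSpace ℝ (Fin d)) i = 0 := rfl
    rw [this, abs_zero, Real.zero_rpow hq.ne']
  rw [Finset.sum_congr rfl fun i _ => this i, Finset.sum_const, smul_zero,
    Real.zero_rpow (by positivity)]

lemma pnorm_smul {q : ℝ} (hq : 0 < q) {d : ℕ} (c : ℝ) (x : EuclideanSpace ℝ (Fin d)) :
    pnorm q (c • x) = |c| * pnorm q x := by
  unfold pnorm
  have h1 : ∀ i : Fin d, |(c • x) i| ^ q = |c| ^ q * |x i| ^ q := fun i => by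
    have : (c • x) i = c * x i := rfl
    rw [this, abs_mul, Real.mul_rpow (abs_nonneg _) (abs_nonneg _)]
  rw [Finset.sum_congr rfl fun i _ => h1 i, ← Finset.mul_sum,
    Real.mul_rpow (Real.rpow_nonneg (abs_nonneg _) _)
      (Finset.sum_nonneg fun i _ => Real.rpow_nonneg (abs_nonneg _) _),
    ← Real.rpow_mul (abs_nonneg _), mul_one_div, div_self hq.ne', Real.rpow_one]

lemma dualExp_conj {p : ℝ} (hp : 2 ≤ p) : (dualExp p).HolderConjugate p :=
  (Real.HolderConjugate.conjExponent (lt_of_lt_of_le one_lt_two hp)).symm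

lemma pnorm_holder {p : ℝ} (hp : 2 ≤ p) {d : ℕ} (s w : EuclideanSpace ℝ (Fin d)) :
    ⟪s, w⟫_ℝ ≤ pnorm (dualExp p) s * pnorm p w := by
  have hc := dualExp_conj hp
  have h := Real.inner_le_Lp_mul_Lq (Finset.univ) (fun i => s i) (fun i => w i) hc
  have hi : ⟪s, w⟫_ℝ = ∑ i, s i * w i := by
    rw [PiLp.inner_apply]
    simp [RCLike.inner_apply]
    exact Finset.sum_congr rfl fun i _ => mul_comm _ _
  rw [hi]
  exact h

lemma pnorm_add_le {q : ℝ} (hq : 1 ≤ q) {d : ℕ} (a b : EuclideanSpace ℝ (Fin d)) :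
    pnorm q (a + b) ≤ pnorm q a + pnorm q b := by
  have h := Real.Lp_add_le (Finset.univ) (fun i => a i) (fun i => b i) hq
  unfold pnorm
  have : ∀ i : Fin d, (a + b) i = a i + b i := fun i => rfl
  rw [Finset.sum_congr rfl fun i _ => by rw [this i]]
  exact h

lemma one_le_dualExp {p : ℝ} (hp : 2 ≤ p) : 1 ≤ dualExp p := (dualExp_conj hp).lt.le

lemma dualExp_pos {p : ℝ} (hp : 2 ≤ p) : 0 < dualExp p := (dualExp_conj hp).pos

lemma pnorm_norming {p : ℝ} (hp : 2 ≤ p) {d : ℕ} (s : EuclideanSpace ℝ (Fin d)) (hs : s ≠ 0) :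
    ∃ w : EuclideanSpace ℝ (Fin d), pnorm p w = 1 ∧ ⟪s, w⟫_ℝ = pnorm (dualExp p) s := by
  have hc := dualExp_conj hp
  set q := dualExp p with hqdef
  have hq1 : 1 < q := hc.lt
  have hp0 : 0 < p := hc.symm.pos
  have hC : 0 < pnorm q s := pnorm_pos hc.pos hs
  set C : ℝ := pnorm q s with hCdef
  refine ⟨(WithLp.toLp 2 (fun i => Real.sign (s i) * |s i| ^ (q - 1) / C ^ (q - 1)) :
    EuclideanSpace ℝ (Fin d)), ?_, ?_⟩
  · -- pnorm p w = 1
    have habs : ∀ i : Fin d, |Real.sign (s i) * |s i| ^ (q - 1) / C ^ (q - 1)| ^ p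
        = |s i| ^ ((q - 1) * p) / C ^ ((q - 1) * p) := by
      intro i
      rcases eq_or_ne (s i) 0 with h0 | h0
      · have hqp0 : (q - 1) * p ≠ 0 := (mul_pos (by linarith : (0:ℝ) < q - 1) hp0).ne'
        simp [h0, Real.sign_zero, Real.zero_rpow hp0.ne', Real.zero_rpow hqp0,
          Real.zero_rpow (by linarith : q - 1 ≠ 0)]
      · have hsign : |Real.sign (s i)| = 1 := by
          rcases lt_or_gt_of_ne h0 with h | h
          · rw [Real.sign_of_neg h]; norm_num
          · rw [Real.sign_of_pos h]; norm_num
        rw [abs_div, abs_mul, hsign, one_mul,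
          abs_of_nonneg (Real.rpow_nonneg (abs_nonneg (s i)) _),
          abs_of_nonneg (Real.rpow_nonneg hC.le _),
          Real.div_rpow (Real.rpow_nonneg (abs_nonneg _) _) (Real.rpow_nonneg hC.le _),
          ← Real.rpow_mul (abs_nonneg _), ← Real.rpow_mul hC.le]
    have hqp : (q - 1) * p = q := by
      have hp1 : p - 1 ≠ 0 := by nlinarith
      rw [hqdef]; unfold dualExp; field_simp; ring
    have hsum : ∑ i, |s i| ^ q = C ^ q := by
      rw [hCdef]
      unfold pnorm
      rw [← Real.rpow_mul (Finset.sum_nonneg fun i _ => Real.rpow_nonneg (abs_nonneg _) _),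
        one_div_mul_cancel hc.ne_zero, Real.rpow_one]
    unfold pnorm
    rw [Finset.sum_congr rfl fun i _ => habs i, hqp]
    rw [← Finset.sum_div, hsum, div_self (by positivity), Real.one_rpow]
  · -- inner product
    have hterm : ∀ i : Fin d, s i * (Real.sign (s i) * |s i| ^ (q - 1) / C ^ (q - 1))
        = |s i| ^ q / C ^ (q - 1) := by
      intro i
      rcases eq_or_ne (s i) 0 with h0 | h0
      · rw [h0, abs_zero, Real.zero_rpow (by positivity : q ≠ 0), zero_div, zero_mul]
      · have hsm : s i * Real.sign (s i) = |s i| := by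
          rcases lt_or_gt_of_ne h0 with h | h
          · rw [Real.sign_of_neg h, abs_of_neg h]; ring
          · rw [Real.sign_of_pos h, abs_of_pos h]; ring
        have hpow : |s i| * |s i| ^ (q - 1) = |s i| ^ q := by
          rw [← Real.rpow_one_add' (abs_nonneg _)
            (ne_of_gt (by linarith : (0:ℝ) < 1 + (q - 1))), show 1 + (q - 1) = q by ring]
        rw [mul_div_assoc, ← mul_assoc, hsm, ← mul_div_assoc, hpow]
    have hsum : ∑ i, |s i| ^ q = C ^ q := by
      rw [hCdef]
      unfold pnorm
      rw [← Real.rpow_mul (Finset.sum_nonneg fun i _ => Real.rpow_nonneg (abs_nonneg _) _),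
        one_div_mul_cancel hc.ne_zero, Real.rpow_one]
    rw [PiLp.inner_apply]
    simp only [RCLike.inner_apply, starRingEnd_apply, star_trivial]
    rw [Finset.sum_congr rfl fun i _ => (mul_comm _ _).trans (hterm i), ← Finset.sum_div, hsum,
      ← Real.rpow_sub hC]
    norm_num

lemma grad_ineq {d : ℕ} {f : EuclideanSpace ℝ (Fin d) → ℝ} (hconv : ConvexOn ℝ Set.univ f)
    (hf : Differentiable ℝ f) (x y : EuclideanSpace ℝ (Fin d)) :
    f x + ⟪gradient f x, y - x⟫_ℝ ≤ f y := by
  set φ : ℝ → ℝ := fun t => f (x + t • (y - x)) with hφdef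
  have hc : ∀ t : ℝ, HasDerivAt (fun u : ℝ => x + u • (y - x)) (y - x) t := by
    intro t
    simpa using ((hasDerivAt_id t).smul_const (y - x)).const_add x
  have hgrad : HasFDerivAt f (InnerProductSpace.toDual ℝ _ (gradient f x)) x :=
    hasGradientAt_iff_hasFDerivAt.mp (hf x).hasGradientAt
  have hφ0 : HasDerivAt φ ⟪gradient f x, y - x⟫_ℝ 0 := by
    have h0 : x + (0 : ℝ) • (y - x) = x := by simp
    have hgrad' : HasFDerivAt f (InnerProductSpace.toDual ℝ _ (gradient f x))
        ((fun u : ℝ => x + u • (y - x)) 0) := by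
      simpa [h0] using hgrad
    have := hgrad'.comp_hasDerivAt (x := (0:ℝ)) (hc 0)
    exact this
  have hφconv : ConvexOn ℝ Set.univ φ := by
    have := hconv.comp_affineMap (AffineMap.lineMap x y : ℝ →ᵃ[ℝ] EuclideanSpace ℝ (Fin d))
    have heq : (f ∘ (AffineMap.lineMap x y : ℝ →ᵃ[ℝ] EuclideanSpace ℝ (Fin d))) = φ := by
      funext t
      simp [hφdef, AffineMap.lineMap_apply_module]
      ring_nf
      congr 1
      module
    rw [heq] at this
    simpa using this
  have hslope := hφconv.le_slope_of_hasDerivAt (Set.mem_univ 0) (Set.mem_univ 1) zero_lt_one hφ0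
  rw [slope_def_field] at hslope
  have h1 : φ 1 = f y := by simp [hφdef]
  have h0 : φ 0 = f x := by simp [hφdef]
  rw [h1, h0] at hslope
  have : ⟪gradient f x, y - x⟫_ℝ ≤ f y - f x := by
    simpa using hslope
  linarith

lemma inner_split {d : ℕ} (g z w' x' : EuclideanSpace ℝ (Fin d)) :
    ⟪g, z - x'⟫_ℝ = ⟪g, w' - x'⟫_ℝ + ⟪g, z - w'⟫_ℝ := by
  rw [inner_sub_right g z x', inner_sub_right g w' x', inner_sub_right g z w']
  ring

set_option maxHeartbeats 2000000 in
theorem stmt3 {d : ℕ} (p L : ℝ) (hp : 2 ≤ p) (hL : 0 < L)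
    (f : EuclideanSpace ℝ (Fin d) → ℝ) (hconv : ConvexOn ℝ Set.univ f)
    (hf : Differentiable ℝ f)
    (hsmooth : ∀ x y : EuclideanSpace ℝ (Fin d),
      pnorm (dualExp p) (gradient f y - gradient f x) ≤ L * pnorm p (y - x))
    (x0 : EuclideanSpace ℝ (Fin d)) (h : HASD d p L f x0) :
    ∀ t : ℕ,
      h.A t * f (h.x t) +
        (1 / (18 * L)) * ∑ i ∈ Finset.range t,
          h.A (i + 1) * pnorm (dualExp p) (gradient f (h.x (i + 1))) ^ 2 ≤
      h.ψ t (h.v t) := by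
  have hp0 : (0:ℝ) < p := by linarith
  -- the quadratic structure of ψ
  obtain ⟨w, hw⟩ : ∃ w' : ℕ → EuclideanSpace ℝ (Fin d),
      w' = fun t => x0 - ∑ i ∈ Finset.range t, h.a (i+1) • gradient f (h.x (i+1)) := ⟨_, rfl⟩
  have key : ∀ t z, h.ψ t z = h.ψ t (w t) + (1/2) * ‖z - w t‖^2 := by
    intro t
    induction t with
    | zero =>
      intro z
      have hw0 : w 0 = x0 := by rw [hw]; simp
      rw [h.ψ_zero z, h.ψ_zero (w 0), hw0, pnorm_two, pnorm_two]
      simp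
    | succ t ih =>
      intro z
      obtain ⟨g, hg⟩ : ∃ g', g' = gradient f (h.x (t+1)) := ⟨_, rfl⟩
      obtain ⟨a, ha⟩ : ∃ a', a' = h.a (t+1) := ⟨_, rfl⟩
      have hwsucc : w (t+1) = w t - a • g := by
        rw [hw, ha, hg]; simp [Finset.sum_range_succ, sub_sub]
      rw [h.ψ_succ t z, h.ψ_succ t (w (t+1)), ih z, ih (w (t+1)), ← hg, ← ha]
      have hd : z - w t = (z - w (t+1)) - a • g := by rw [hwsucc]; abel
      have hd2 : w (t+1) - w t = -(a • g) := by rw [hwsucc]; abel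
      have e1 : ‖z - w t‖^2 = ‖z - w (t+1)‖^2 - 2*(a*⟪g, z - w (t+1)⟫_ℝ) + a^2*‖g‖^2 := by
        rw [hd, norm_sub_sq_real, real_inner_smul_right, real_inner_comm, norm_smul]
        simp [mul_pow, sq_abs]
        try ring
      have e2 : ‖w (t+1) - w t‖^2 = a^2*‖g‖^2 := by
        rw [hd2, norm_neg, norm_smul]
        simp [mul_pow, sq_abs]
      have e3 := inner_split g z (w (t+1)) (h.x (t+1))
      rw [e1, e2, e3]
      ring
  have v_eq : ∀ t, h.v t = w t := by
    intro t
    have h1 := key t (h.v t)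
    have h2 := h.v_min t (w t)
    have h3 : ‖h.v t - w t‖^2 ≤ 0 := by
      have hww := key t (w t)
      simp at hww
      linarith only [h1, h2, hww]
    have h4 : ‖h.v t - w t‖ = 0 := by nlinarith only [norm_nonneg (h.v t - w t), h3]
    exact sub_eq_zero.mp (norm_eq_zero.mp h4)
  have sc : ∀ t z, h.ψ t z = h.ψ t (h.v t) + (1/2) * ‖z - h.v t‖^2 := by
    intro t z
    rw [v_eq t]
    exact key t z
  have Anonneg : ∀ t, 0 ≤ h.A t := by
    intro t
    induction t with
    | zero => rw [h.A_zero]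
    | succ t ih => rw [h.A_succ t]; linarith [h.a_pos t]
  intro t
  induction t with
  | zero =>
    rw [h.A_zero, h.ψ_zero]
    simp
    positivity
  | succ t ih =>
    obtain ⟨g, hg⟩ : ∃ g', g' = gradient f (h.x (t+1)) := ⟨_, rfl⟩
    obtain ⟨s, hs⟩ : ∃ s', s' = gradient f (h.y t) := ⟨_, rfl⟩
    obtain ⟨u, hu⟩ : ∃ u', u' = h.x (t+1) - h.y t := ⟨_, rfl⟩
    obtain ⟨a, ha⟩ : ∃ a', a' = h.a (t+1) := ⟨_, rfl⟩
    obtain ⟨G, hG⟩ : ∃ G', G' = pnorm (dualExp p) g := ⟨_, rfl⟩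
    obtain ⟨S, hS⟩ : ∃ S', S' = pnorm (dualExp p) s := ⟨_, rfl⟩
    obtain ⟨U, hU⟩ : ∃ U', U' = pnorm p u := ⟨_, rfl⟩
    have hapos : 0 < a := ha ▸ h.a_pos t
    have hA'pos : 0 < h.A (t+1) := by rw [h.A_succ t]; linarith [Anonneg t]
    have hgne : g ≠ 0 := hg ▸ h.grad_ne t
    have hGpos : 0 < G := hG ▸ pnorm_pos (dualExp_pos hp) hgne
    -- s ≠ 0
    have hsne : s ≠ 0 := by
      intro hs0
      have hx := h.x_min t (h.y t)
      rw [← hs, ← hu, ← hU, sub_self, hs0, inner_zero_left, inner_zero_left,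
        pnorm_zero hp0] at hx
      norm_num at hx
      have hxy : h.x (t+1) = h.y t := by
        by_contra hne
        have hune : u ≠ 0 := fun h0 => hne (by rwa [hu, sub_eq_zero] at h0)
        have hupos : 0 < U := hU ▸ pnorm_pos hp0 hune
        nlinarith only [mul_pos hL (pow_pos hupos 2), hx]
      exact h.grad_ne t (by rw [hxy, ← hs, hs0])
    have hSpos : 0 < S := hS ▸ pnorm_pos (dualExp_pos hp) hsne
    -- descent step analysis
    have hdesc : ⟪s, u⟫_ℝ + L * U^2 ≤ -(S^2/(4*L)) := by
      obtain ⟨wv, hw1, hw2⟩ := pnorm_norming hp s hsne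
      have hx := h.x_min t (h.y t - (S/(2*L)) • wv)
      rw [← hs, ← hu, ← hU] at hx
      have hzy : h.y t - (S/(2*L)) • wv - h.y t = -((S/(2*L)) • wv) := by abel
      rw [hzy, inner_neg_right, real_inner_smul_right, hw2, ← hS, pnorm_neg,
        pnorm_smul hp0, hw1, abs_of_nonneg (by positivity : (0:ℝ) ≤ S/(2*L)), mul_one] at hx
      have heq : -(S/(2*L)*S) + L*(S/(2*L))^2 = -(S^2/(4*L)) := by
        field_simp
        ring
      linarith only [hx, heq]
    have hUnn : 0 ≤ U := hU ▸ pnorm_nonneg _ _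
    have hhold : -(S*U) ≤ ⟪s, u⟫_ℝ := by
      have h1 := pnorm_holder hp s (-u)
      rw [pnorm_neg, ← hS, ← hU, inner_neg_right] at h1
      linarith only [h1]
    have hsq : (U - S/(2*L))^2 ≤ 0 := by
      have hexp : L*(U - S/(2*L))^2 = L*U^2 - S*U + S^2/(4*L) := by
        field_simp
        ring
      nlinarith only [hexp, hdesc, hhold, hL, sq_nonneg (U - S/(2*L))]
    have hU0 : (U - S/(2*L))^2 = 0 := le_antisymm hsq (sq_nonneg _)
    have hUeq : U = S/(2*L) := by
      have h0 : U - S/(2*L) = 0 := by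
        exact pow_eq_zero_iff (by norm_num : (2:ℕ) ≠ 0) |>.mp hU0
      linarith
    have hLU : L * U^2 = S^2/(4*L) := by
      rw [hUeq]
      field_simp
      ring
    have hLU2 : L * U = S/2 := by
      rw [hUeq]
      field_simp
      try ring
    have hsu : ⟪s, u⟫_ℝ ≤ -(S^2/(2*L)) := by
      have h4 : S^2/(4*L) + S^2/(4*L) = S^2/(2*L) := by ring
      linarith only [hdesc, hLU, h4]
    -- smoothness comparison
    have hgs : pnorm (dualExp p) (g - s) ≤ L * U := by
      have h1 := hsmooth (h.y t) (h.x (t+1))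
      rw [← hg, ← hs, ← hu, ← hU] at h1
      exact h1
    have hGS : G ≤ S + L*U := by
      have htr := pnorm_add_le (one_le_dualExp hp) s (g - s)
      rw [show s + (g - s) = g from by abel, ← hG, ← hS] at htr
      linarith only [htr, hgs]
    have hgu : ⟪g - s, u⟫_ℝ ≤ L*U^2 := by
      have hh := pnorm_holder hp (g - s) u
      rw [← hU] at hh
      have h2 : pnorm (dualExp p) (g - s) * U ≤ (L*U)*U :=
        mul_le_mul_of_nonneg_right hgs hUnn
      have h3 : (L*U)*U = L*U^2 := by ring
      linarith only [hh, h2, h3]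
    have hgu2 : ⟪g, u⟫_ℝ ≤ -(S^2/(4*L)) := by
      have hspl : ⟪g - s, u⟫_ℝ = ⟪g, u⟫_ℝ - ⟪s, u⟫_ℝ := inner_sub_left g s u
      have h4 : S^2/(4*L) + S^2/(4*L) = S^2/(2*L) := by ring
      linarith only [hspl, hgu, hsu, hLU, h4]
    have hkey : G^2/(9*L) ≤ -⟪g, u⟫_ℝ := by
      have h9 : G^2/(9*L) ≤ S^2/(4*L) := by
        rw [div_le_div_iff₀ (by positivity) (by positivity)]
        have hGS2 : G ≤ 3/2*S := by linarith only [hGS, hLU2]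
        have hsq2 : G^2 ≤ (3/2*S)^2 := pow_le_pow_left₀ hGpos.le hGS2 2
        nlinarith only [mul_le_mul_of_nonneg_right hsq2 hL.le, hL, hSpos]
      linarith only [h9, hgu2]
    -- the ρ bound
    have hgn : (0:ℝ) < ‖g‖ := norm_pos_iff.mpr hgne
    have hρpos := h.ρ_pos t
    have hrl := h.ρ_lb t
    rw [← hg, pnorm_two, ← hG] at hrl
    have hG2 : (0:ℝ) < G^2 := by positivity
    rw [← mul_div_assoc] at hrl
    have h1 : (1/2) * ‖g‖^2 ≤ h.ρ t * G^2 := (div_le_iff₀ hG2).mp hrl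
    have h18 : (18:ℝ)*L*h.ρ t ≠ 0 :=
      (mul_pos (mul_pos (by norm_num : (0:ℝ) < 18) hL) hρpos).ne'
    have hA'eq : h.A (t+1) = 18*L*h.ρ t*a^2 := by
      have hae := h.a_eq t
      rw [← h.A_succ t, ← ha, eq_div_iff h18] at hae
      linarith only [hae]
    have hrho : (1/2) * a^2 * ‖g‖^2 ≤ h.A (t+1) * G^2 / (18*L) := by
      calc (1/2) * a^2 * ‖g‖^2 = ((1/2) * ‖g‖^2) * a^2 := by ring
        _ ≤ (h.ρ t * G^2) * a^2 := mul_le_mul_of_nonneg_right h1 (sq_nonneg a)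
        _ = h.A (t+1) * G^2 / (18*L) := by
            rw [hA'eq]
            field_simp
    -- assembling the induction step
    rw [Finset.sum_range_succ, show pnorm (dualExp p) (gradient f (h.x (t+1))) = G from by
      rw [hG, hg]]
    have hψ := h.ψ_succ t (h.v (t+1))
    rw [← hg, ← ha] at hψ
    have hsc := sc t (h.v (t+1))
    have hsplit := inner_split g (h.v (t+1)) (h.v t) (h.x (t+1))
    have hform : h.ψ (t+1) (h.v (t+1)) = h.ψ t (h.v t) + (1/2)*‖h.v (t+1) - h.v t‖^2
        + a * f (h.x (t+1)) + a * ⟪g, h.v (t+1) - h.v t⟫_ℝ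
        + a * ⟪g, h.v t - h.x (t+1)⟫_ℝ := by
      rw [hψ, hsc, hsplit]
      ring
    have hquad : -((1/2) * a^2 * ‖g‖^2)
        ≤ (1/2)*‖h.v (t+1) - h.v t‖^2 + a * ⟪g, h.v (t+1) - h.v t⟫_ℝ := by
      have hexp : ‖(h.v (t+1) - h.v t) + a • g‖^2
          = ‖h.v (t+1) - h.v t‖^2 + 2*(a*⟪g, h.v (t+1) - h.v t⟫_ℝ) + a^2*‖g‖^2 := by
        rw [norm_add_sq_real, real_inner_smul_right, real_inner_comm, norm_smul]
        simp [mul_pow, sq_abs]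
        try ring
      nlinarith only [sq_nonneg ‖(h.v (t+1) - h.v t) + a • g‖, hexp]
    have hcv := grad_ineq hconv hf (h.x (t+1)) (h.x t)
    rw [← hg] at hcv
    have hcvA : h.A t * (f (h.x (t+1)) + ⟪g, h.x t - h.x (t+1)⟫_ℝ) ≤ h.A t * f (h.x t) :=
      mul_le_mul_of_nonneg_left hcv (Anonneg t)
    have hA'ne : h.A (t+1) ≠ 0 := hA'pos.ne'
    have hyid0 : h.A (t+1) • h.y t = h.A t • h.x t + a • h.v t := by
      rw [h.y_def t, smul_add, smul_smul, smul_smul, ← ha]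
      have c1 : h.A (t+1) * (1 - a / h.A (t+1)) = h.A t := by
        rw [mul_sub, mul_one, mul_div_cancel₀ _ hA'ne, h.A_succ t, ← ha]
        ring
      have c2 : h.A (t+1) * (a / h.A (t+1)) = a := by
        rw [mul_div_cancel₀ _ hA'ne]
      rw [c1, c2]
    have hyid : h.A t • (h.x t - h.x (t+1)) + a • (h.v t - h.x (t+1))
        = h.A (t+1) • (h.y t - h.x (t+1)) := by
      rw [smul_sub, smul_sub, smul_sub, hyid0, h.A_succ t, ← ha, add_smul]
      abel
    have hinner_y : h.A t * ⟪g, h.x t - h.x (t+1)⟫_ℝ + a * ⟪g, h.v t - h.x (t+1)⟫_ℝ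
        = h.A (t+1) * (-⟪g, u⟫_ℝ) := by
      rw [← real_inner_smul_right, ← real_inner_smul_right, ← inner_add_right, hyid,
        real_inner_smul_right]
      congr 1
      rw [show h.y t - h.x (t+1) = -u from by rw [hu]; abel, inner_neg_right]
    have hkeyA : h.A (t+1) * (G^2/(9*L)) ≤ h.A (t+1) * (-⟪g, u⟫_ℝ) :=
      mul_le_mul_of_nonneg_left hkey hA'pos.le
    have hAF : h.A (t+1) * f (h.x (t+1)) = h.A t * f (h.x (t+1)) + a * f (h.x (t+1)) := by
      rw [h.A_succ t, ← ha]
      ring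
    have hE1 : h.A (t+1) * (G^2/(9*L)) = h.A (t+1)*G^2/(18*L) + h.A (t+1)*G^2/(18*L) := by
      field_simp
      ring
    have hE2 : (1/(18*L)) * (∑ i ∈ Finset.range t,
          h.A (i + 1) * pnorm (dualExp p) (gradient f (h.x (i + 1))) ^ 2 + h.A (t+1)*G^2)
        = (1/(18*L)) * ∑ i ∈ Finset.range t,
          h.A (i + 1) * pnorm (dualExp p) (gradient f (h.x (i + 1))) ^ 2
          + h.A (t+1)*G^2/(18*L) := by
      ring
    linarith only [hform, hquad, ih, hcvA, hinner_y, hkeyA, hAF, hE1, hE2, hrho]
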